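/- Let R ∈ {0,1}^{n×n} be a symmetric binary matrix with R ≥ I_n, and let X ∈ ℝ^{n×n} be an invertible matrix with X ∈ Sparse(R^{n−1}), where R^{n−1} is the (n−1)-fold structural power of R. Then X⁻¹ ∈ Sparse(R^{n−1}); that is, the set of invertible matrices with sparsity pattern R^{n−1} is closed under matrix inversion. -/

import Mathlib

open Matrix

/-- Structural product of binary (Boolean) matrices:
`(sprod X Z) i j = true` iff `∃ k, X i k = true ∧ Z k j = true`. -/
def sprod {m n p : ℕ} (X : Matrix (Fin m) (Fin n) Bool) (Z : Matrix (Fin n) (Fin p) Bool) :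
    Matrix (Fin m) (Fin p) Bool :=
  Matrix.of fun i j => decide (∃ k, X i k = true ∧ Z k j = true)

/-- Structural power of a binary matrix, with `spow R 0 = I`. -/
def spow {n : ℕ} (R : Matrix (Fin n) (Fin n) Bool) : ℕ → Matrix (Fin n) (Fin n) Bool
  | 0 => Matrix.of fun i j => decide (i = j)
  | k + 1 => sprod (spow R k) R

/-- `Y` belongs to the sparsity subspace `Sparse(X)`. -/
def InSparse {m n : ℕ} (X : Matrix (Fin m) (Fin n) Bool) (Y : Matrix (Fin m) (Fin n) ℝ) : Prop :=
  ∀ i j, X i j = false → Y i j = 0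

/-- The binary matrix encoding the sparsity pattern of a real matrix. -/
noncomputable def Struct {m n : ℕ} (Y : Matrix (Fin m) (Fin n) ℝ) : Matrix (Fin m) (Fin n) Bool :=
  Matrix.of fun i j => decide (Y i j ≠ 0)

/-- Entrywise order on binary matrices: `leB X X'` means `X ≤ X'`. -/
def leB {m n : ℕ} (X X' : Matrix (Fin m) (Fin n) Bool) : Prop :=
  ∀ i j, X i j = true → X' i j = true

lemma sprod_apply {m n p : ℕ} (X : Matrix (Fin m) (Fin n) Bool) (Z : Matrix (Fin n) (Fin p) Bool)
    (i j) : sprod X Z i j = true ↔ ∃ k, X i k = true ∧ Z k j = true := by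
  simp [sprod]

lemma sprod_assoc {a b c d : ℕ} (A : Matrix (Fin a) (Fin b) Bool) (B : Matrix (Fin b) (Fin c) Bool)
    (C : Matrix (Fin c) (Fin d) Bool) : sprod (sprod A B) C = sprod A (sprod B C) := by
  ext i j
  simp only [sprod, Matrix.of_apply, decide_eq_decide]
  apply decide_eq_decide.mpr
  constructor
  · rintro ⟨m, hm, hC⟩
    simp only [decide_eq_true_eq] at hm
    obtain ⟨k, hA, hB⟩ := hm
    exact ⟨k, hA, by simp only [decide_eq_true_eq]; exact ⟨m, hB, hC⟩⟩
  · rintro ⟨k, hA, hm⟩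
    simp only [decide_eq_true_eq] at hm
    obtain ⟨m, hB, hC⟩ := hm
    exact ⟨m, by simp only [decide_eq_true_eq]; exact ⟨k, hA, hB⟩, hC⟩

lemma sprod_id_left {n p : ℕ} (A : Matrix (Fin n) (Fin p) Bool) :
    sprod (Matrix.of fun i j => decide (i = j)) A = A := by
  ext i j
  simp only [sprod, Matrix.of_apply]
  rcases h : A i j with _ | _
  · apply decide_eq_false
    rintro ⟨k, hk, hA⟩
    simp only [decide_eq_true_eq] at hk
    subst hk; simp [h] at hA
  · simp only [decide_eq_true_eq]
    exact ⟨i, by simp, h⟩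

lemma sprod_id_right {n p : ℕ} (A : Matrix (Fin p) (Fin n) Bool) :
    sprod A (Matrix.of fun i j => decide (i = j)) = A := by
  ext i j
  simp only [sprod, Matrix.of_apply]
  rcases h : A i j with _ | _
  · apply decide_eq_false
    rintro ⟨k, hA, hk⟩
    simp only [decide_eq_true_eq] at hk
    subst hk; simp [h] at hA
  · simp only [decide_eq_true_eq]
    exact ⟨j, h, by simp⟩

lemma spow_succ' {n : ℕ} (R : Matrix (Fin n) (Fin n) Bool) (k : ℕ) :
    spow R (k + 1) = sprod R (spow R k) := by
  induction k with
  | zero => show sprod (spow R 0) R = sprod R (spow R 0)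
            rw [show spow R 0 = (Matrix.of fun i j => decide ((i:Fin n) = j)) from rfl,
              sprod_id_left, sprod_id_right]
  | succ k ih =>
      show sprod (spow R (k+1)) R = _
      rw [ih, sprod_assoc, ← ih]
      rfl

section Graph
variable {n : ℕ} (R : Matrix (Fin n) (Fin n) Bool)
  (hsym : ∀ i j, R i j = R j i) (hdiag : ∀ i, R i i = true)
include hsym hdiag in

/-- Simple graph associated to `R`. -/
def Rgraph : SimpleGraph (Fin n) where
  Adj i j := R i j = true ∧ i ≠ j
  symm := by constructor; intro i j ⟨h, hne⟩; exact ⟨by rw [hsym]; exact h, hne.symm⟩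
  loopless := by constructor; intro i ⟨_, hne⟩; exact hne rfl

include hdiag in
lemma spow_refl (k : ℕ) (i : Fin n) : spow R k i i = true := by
  induction k with
  | zero => simp [spow]
  | succ k ih =>
      show sprod (spow R k) R i i = true
      rw [sprod_apply]
      exact ⟨i, ih, hdiag i⟩

include hdiag in
lemma spow_pad (k : ℕ) (i j : Fin n) (h : spow R k i j = true) :
    spow R (k + 1) i j = true := by
  show sprod (spow R k) R i j = true
  rw [sprod_apply]
  exact ⟨j, h, hdiag j⟩

include hdiag in
lemma spow_mono (k l : ℕ) (hkl : k ≤ l) (i j : Fin n) (h : spow R k i j = true) :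
    spow R l i j = true := by
  induction l with
  | zero => exact Nat.le_zero.mp hkl ▸ h
  | succ l ih =>
      rcases Nat.lt_or_ge k (l+1) with hl | hl
      · exact spow_pad R hdiag l i j (ih (Nat.lt_succ_iff.mp hl))
      · exact (Nat.le_antisymm hkl hl) ▸ h

lemma walk_spow {i j : Fin n} (p : (Rgraph R hsym).Walk i j) :
    spow R p.length i j = true := by
  induction p with
  | nil => simp [spow]
  | @cons a b c h p ih =>
      rw [SimpleGraph.Walk.length_cons, spow_succ', sprod_apply]
      exact ⟨b, h.1, ih⟩

lemma spow_reach {k : ℕ} {i j : Fin n} (h : spow R k i j = true) :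
    (Rgraph R hsym).Reachable i j := by
  induction k generalizing j with
  | zero =>
      simp only [spow, Matrix.of_apply, decide_eq_true_eq] at h
      exact h ▸ SimpleGraph.Reachable.refl i
  | succ k ih =>
      rw [show spow R (k+1) = sprod (spow R k) R from rfl, sprod_apply] at h
      obtain ⟨m, hm, hR⟩ := h
      by_cases hmj : m = j
      · exact hmj ▸ ih hm
      · exact (ih hm).trans (SimpleGraph.Adj.reachable ⟨hR, hmj⟩)

include hdiag in
lemma reach_spow {i j : Fin n} (h : (Rgraph R hsym).Reachable i j) :
    spow R (n - 1) i j = true := by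
  obtain ⟨p⟩ := h
  have hlt : p.toPath.1.length < n := by
    have := p.toPath.2.length_lt
    simpa [Fintype.card_fin] using this
  exact spow_mono R hdiag _ _ (Nat.le_sub_one_of_lt hlt) i j
    (walk_spow R hsym p.toPath.1)

include hsym hdiag in
lemma spow_trans {i j k : Fin n} (hij : spow R (n - 1) i j = true)
    (hjk : spow R (n - 1) j k = true) : spow R (n - 1) i k = true :=
  reach_spow R hsym hdiag ((spow_reach R hsym hij).trans (spow_reach R hsym hjk))

end Graph

section Algebra
variable {n : ℕ} {E : Matrix (Fin n) (Fin n) Bool}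
  (hrefl : ∀ i, E i i = true)
  (htrans : ∀ i j k, E i j = true → E j k = true → E i k = true)

include hrefl in
lemma inSparse_one : InSparse E (1 : Matrix (Fin n) (Fin n) ℝ) := by
  intro i j hij
  have hne : i ≠ j := by rintro rfl; rw [hrefl i] at hij; cases hij
  exact Matrix.one_apply_ne hne

include htrans in
lemma inSparse_mul {Y Z : Matrix (Fin n) (Fin n) ℝ} (hY : InSparse E Y) (hZ : InSparse E Z) :
    InSparse E (Y * Z) := by
  intro i j hij
  rw [Matrix.mul_apply]
  apply Finset.sum_eq_zero
  intro k _
  rcases h1 : E i k with _ | _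
  · rw [hY i k h1, zero_mul]
  · rcases h2 : E k j with _ | _
    · rw [hZ k j h2, mul_zero]
    · rw [htrans i k j h1 h2] at hij; cases hij

include hrefl htrans in
lemma inSparse_pow {Y : Matrix (Fin n) (Fin n) ℝ} (hY : InSparse E Y) (k : ℕ) :
    InSparse E (Y ^ k) := by
  induction k with
  | zero => simpa using inSparse_one hrefl
  | succ k ih => rw [pow_succ]; exact inSparse_mul htrans ih hY

include hrefl htrans in
lemma inSparse_aeval {Y : Matrix (Fin n) (Fin n) ℝ} (hY : InSparse E Y) (q : Polynomial ℝ) :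
    InSparse E (Polynomial.aeval Y q) := by
  intro i j hij
  rw [Polynomial.aeval_eq_sum_range]
  rw [Matrix.sum_apply]
  apply Finset.sum_eq_zero
  intro k _
  rw [Matrix.smul_apply, inSparse_pow hrefl htrans hY k i j hij, smul_zero]

end Algebra

/-- for symmetric binary `R ≥ Iₙ`, the set of invertible
matrices with sparsity pattern `R^{n-1}` is closed under inversion: if `X` is
invertible and `X ∈ Sparse(R^{n-1})`, then `X⁻¹ ∈ Sparse(R^{n-1})`. -/
theorem inverse_preserves_closure_sparsity {n : ℕ}
    (R : Matrix (Fin n) (Fin n) Bool)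
    (hsym : ∀ i j, R i j = R j i) (hdiag : ∀ i, R i i = true)
    (X : Matrix (Fin n) (Fin n) ℝ) (hX : IsUnit X)
    (hXs : InSparse (spow R (n - 1)) X) :
    InSparse (spow R (n - 1)) X⁻¹ := by
  have hrefl : ∀ i, spow R (n-1) i i = true := spow_refl R hdiag (n-1)
  have htrans : ∀ i j k, spow R (n-1) i j = true → spow R (n-1) j k = true →
      spow R (n-1) i k = true := fun i j k => spow_trans R hsym hdiag
  -- Cayley–Hamilton: X⁻¹ is a polynomial in X
  have h0 : Polynomial.aeval X X.charpoly = 0 := Matrix.aeval_self_charpoly X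
  have hdet : X.det ≠ 0 := ((Matrix.isUnit_iff_isUnit_det X).mp hX).ne_zero
  have hc : X.charpoly.coeff 0 ≠ 0 := by
    intro h
    apply hdet
    rw [Matrix.det_eq_sign_charpoly_coeff, h, mul_zero]
  set c := X.charpoly.coeff 0 with hcdef
  set q := X.charpoly.divX with hqdef
  have hsplit : Polynomial.X * q + Polynomial.C c = X.charpoly :=
    Polynomial.X_mul_divX_add X.charpoly
  have h1 : X * Polynomial.aeval X q + c • (1 : Matrix (Fin n) (Fin n) ℝ) = 0 := by
    have := congrArg (Polynomial.aeval X) hsplit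
    rw [h0] at this
    simpa [Algebra.algebraMap_eq_smul_one] using this
  have h2 : X * ((-c)⁻¹ • Polynomial.aeval X q) = 1 := by
    rw [Matrix.mul_smul]
    have : X * Polynomial.aeval X q = (-c) • (1 : Matrix (Fin n) (Fin n) ℝ) := by
      have := h1
      rw [add_eq_zero_iff_eq_neg] at this
      rw [this, neg_smul]
    rw [this, smul_smul, inv_mul_cancel₀ (neg_ne_zero.mpr hc), one_smul]
  have hinv : X⁻¹ = (-c)⁻¹ • Polynomial.aeval X q := (Matrix.inv_eq_right_inv h2).symm ▸ rfl
  rw [Matrix.inv_eq_right_inv h2]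
  intro i j hij
  rw [Matrix.smul_apply, inSparse_aeval hrefl htrans hXs q i j hij, smul_zero]
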